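/- Let f : {0,1}^n → {0,1} have monotone block sensitivity MBS(f) = k. Then the 1/3-approximate sparsity of f satisfies log asparsity(f) = Ω(√k); equivalently, MBS(f) = O((log asparsity(f))²). -/

import Mathlib

open Finset Classical

/-- Evaluation of a multilinear polynomial (given by its coefficients) at a Boolean point. -/
noncomputable def mlEval {n : ℕ} (a : Finset (Fin n) → ℝ) (x : Fin n → Bool) : ℝ :=
  ∑ S : Finset (Fin n), a S * ∏ i ∈ S, (if x i then (1 : ℝ) else 0)

/-- A Boolean function viewed as a real-valued function. -/
noncomputable def toRealFn {n : ℕ} (f : (Fin n → Bool) → Bool) : (Fin n → Bool) → ℝ :=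
  fun x => if f x then 1 else 0

/-- The `1/3`-approximate sparsity of a Boolean function `f`. -/
noncomputable def asparsity {n : ℕ} (f : (Fin n → Bool) → Bool) : ℕ :=
  sInf {s : ℕ | ∃ a : Finset (Fin n) → ℝ,
    (∀ x, |mlEval a x - toRealFn f x| ≤ 1 / 3) ∧
    ((Finset.univ : Finset (Finset (Fin n))).filter (fun S => a S ≠ 0)).card ≤ s}

/-- Flip the coordinates in `B` of `x` from 0 to 1. -/
def flipUp {n : ℕ} (x : Fin n → Bool) (B : Finset (Fin n)) : Fin n → Bool :=
  fun i => if i ∈ B then true else x i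

section AuxStuff
open Polynomial Nat
set_option maxHeartbeats 1600000


-- core factorial inequality
lemma core_fact (d i : ℕ) (h : i ≤ d) : d ! * d ! ≤ (d - i) ! * (d + i) ! := by
  induction i with
  | zero => simp
  | succ i ih =>
    have hi : i ≤ d := Nat.le_of_succ_le h
    have h1 : (d - i) ! = (d - i) * (d - (i+1)) ! := by
      have : d - i = (d - (i+1)) + 1 := by omega
      rw [this, Nat.factorial_succ]
    have h2 : (d + (i+1)) ! = (d + i + 1) * (d + i) ! := by
      rw [show d + (i+1) = (d+i)+1 by ring, Nat.factorial_succ]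
    calc d ! * d ! ≤ (d - i) ! * (d + i) ! := ih hi
      _ = (d - i) * ((d - (i+1)) ! * (d+i)!) := by rw [h1]; ring
      _ ≤ (d + i + 1) * ((d - (i+1)) ! * (d+i)!) := by
          exact Nat.mul_le_mul_right _ (by omega)
      _ = (d - (i+1)) ! * (d + (i+1)) ! := by rw [h2]; ring

lemma prod_range_shift (i : ℕ) : ∀ d : ℕ, i ! * ∏ j ∈ range d, (i + 1 + j) = (i + d) ! := by
  intro d
  induction d with
  | zero => simp
  | succ d ih =>
    rw [prod_range_succ, ← mul_assoc, ih, show i + (d+1) = (i+d) + 1 by ring,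
      Nat.factorial_succ]
    ring

lemma erase_split (d i : ℕ) (h1 : 1 ≤ i) (h2 : i ≤ d) :
    (Icc 1 d).erase i = Ico 1 i ∪ Icc (i+1) d := by
  ext j; simp only [mem_erase, mem_Icc, mem_union, mem_Ico]; omega


lemma prod_low (i : ℕ) (h1 : 1 ≤ i) : ∏ j ∈ Ico 1 i, (i - j) = (i - 1)! := by
  rw [Finset.prod_Ico_eq_prod_range]
  have h1' : ∏ j ∈ range (i - 1), (i - (1 + j)) = ∏ j ∈ range (i-1), ((i-1) - 1 - j + 1) :=
    Finset.prod_congr rfl (by intro j hj; simp only [mem_range] at hj; omega)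
  have h2 : ∏ j ∈ range (i-1), ((i-1) - 1 - j + 1) = ∏ j ∈ range (i-1), (j+1) :=
    Finset.prod_range_reflect (fun t => t + 1) (i-1)
  rw [h1', h2, Finset.prod_range_add_one_eq_factorial]

lemma prod_high (d i : ℕ) : ∏ j ∈ Icc (i+1) d, (j - i) = (d - i)! := by
  rw [← Finset.Ico_add_one_right_eq_Icc, Finset.prod_Ico_eq_prod_range]
  have : ∀ j ∈ range (d + 1 - (i+1)), (i + 1 + j) - i = j + 1 := by intro j hj; omega
  rw [Finset.prod_congr rfl this, Finset.prod_range_add_one_eq_factorial]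
  congr 1; omega

lemma prod_sum_shift (d i : ℕ) : i ! * ∏ j ∈ Icc 1 d, (i + j) = (i + d)! := by
  rw [← Finset.Ico_add_one_right_eq_Icc, Finset.prod_Ico_eq_prod_range]
  have h : ∀ j ∈ range (d + 1 - 1), (i + (1 + j)) = i + 1 + j := by intro j hj; omega
  rw [Finset.prod_congr rfl h]
  have h2 := prod_range_shift i (d + 1 - 1)
  simpa using h2

lemma natT (d i : ℕ) (h1 : 1 ≤ i) (h2 : i ≤ d) :
    ∏ j ∈ (Icc 1 d).erase i, j^2 ≤
      2 * ∏ j ∈ (Icc 1 d).erase i, (((i-j)+(j-i)) * (i + j)) := by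
  have hmem : i ∈ Icc 1 d := by simp only [mem_Icc]; omega
  have hc : 0 < i^2 * (2*i* i !) := by positivity
  refine Nat.le_of_mul_le_mul_left ?_ hc
  have hfac : i ! = i * (i-1)! := by
    conv_lhs => rw [show i = (i - 1) + 1 by omega]
    rw [Nat.factorial_succ]
    congr 1
    omega
  have hA0 : ∏ j ∈ Icc 1 d, j = d ! := by
    rw [← Finset.Ico_add_one_right_eq_Icc, Finset.prod_Ico_id_eq_factorial]
  have hA : i * ∏ j ∈ (Icc 1 d).erase i, j = d ! := by
    rw [← hA0]; exact Finset.mul_prod_erase _ (fun j => j) hmem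
  have hdisj : Disjoint (Ico 1 i) (Icc (i+1) d) := by
    rw [Finset.disjoint_left]; intro j hj hj'
    simp only [mem_Ico, mem_Icc] at *; omega
  have hB : ∏ j ∈ (Icc 1 d).erase i, ((i-j)+(j-i)) = (i-1)! * (d-i)! := by
    rw [erase_split d i h1 h2, Finset.prod_union hdisj]
    have e1 : ∀ j ∈ Ico 1 i, (i-j)+(j-i) = i - j := by
      intro j hj; simp only [mem_Ico] at hj; omega
    have e2 : ∀ j ∈ Icc (i+1) d, (i-j)+(j-i) = j - i := by
      intro j hj; simp only [mem_Icc] at hj; omega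
    rw [Finset.prod_congr rfl e1, Finset.prod_congr rfl e2, prod_low i h1, prod_high d i]
  have hC : 2*i * ∏ j ∈ (Icc 1 d).erase i, (i + j) = ∏ j ∈ Icc 1 d, (i + j) := by
    have h := Finset.mul_prod_erase (Icc 1 d) (fun j => i + j) hmem
    calc 2*i * ∏ j ∈ (Icc 1 d).erase i, (i + j)
        = (i + i) * ∏ j ∈ (Icc 1 d).erase i, (i + j) := by ring
      _ = ∏ j ∈ Icc 1 d, (i + j) := h
  have hsq : ∏ j ∈ (Icc 1 d).erase i, j^2 = (∏ j ∈ (Icc 1 d).erase i, j)^2 :=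
    Finset.prod_pow _ 2 (fun j => j)
  have hL : i^2 * (2*i* i !) * ∏ j ∈ (Icc 1 d).erase i, j^2
      = 2*i^2*(i-1)! * (d ! * d !) := by
    rw [hsq]
    calc i^2 * (2*i* i !) * (∏ j ∈ (Icc 1 d).erase i, j)^2
        = (2*i* i !) * (i * ∏ j ∈ (Icc 1 d).erase i, j)^2 := by ring
      _ = (2*i*(i*(i-1)!)) * (d ! * d !) := by rw [hA, hfac]; ring
      _ = 2*i^2*(i-1)! * (d ! * d !) := by ring
  have hR : i^2 * (2*i* i !) * (2 * ∏ j ∈ (Icc 1 d).erase i, (((i-j)+(j-i)) * (i + j)))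
      = 2*i^2*(i-1)! * ((d-i)! * (i+d)!) := by
    rw [Finset.prod_mul_distrib, hB]
    calc i^2*(2*i* i !) * (2 * ((i-1)! * (d-i)! * ∏ j ∈ (Icc 1 d).erase i, (i+j)))
        = 2*i^2*(i-1)!*(d-i)! * (i ! * (2*i * ∏ j ∈ (Icc 1 d).erase i, (i+j))) := by ring
      _ = 2*i^2*(i-1)!*(d-i)! * (i ! * ∏ j ∈ Icc 1 d, (i+j)) := by rw [hC]
      _ = 2*i^2*(i-1)!*(d-i)! * (i+d)! := by rw [prod_sum_shift]
      _ = 2*i^2*(i-1)! * ((d-i)! * (i+d)!) := by ring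
  rw [hL, hR]
  have hcore := core_fact d i h2
  calc 2*i^2*(i-1)! * (d ! * d !) ≤ 2*i^2*(i-1)! * ((d-i)! * (d+i)!) :=
        Nat.mul_le_mul_left _ hcore
    _ = 2*i^2*(i-1)! * ((d-i)! * (i+d)!) := by rw [Nat.add_comm d i]

lemma sum_inv_sq_aux : ∀ d : ℕ, 1 ≤ d → ∑ i ∈ Icc 1 d, (1:ℝ)/(i:ℝ)^2 ≤ 2 - 1/(d:ℝ) := by
  intro d
  induction d with
  | zero => intro h; omega
  | succ d ih =>
    intro _
    by_cases hd : 1 ≤ d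
    · have hsum := Finset.sum_Icc_succ_top (by omega : 1 ≤ d + 1)
        (fun i : ℕ => (1:ℝ)/(i:ℝ)^2)
      rw [hsum]
      have hd' : (1:ℝ) ≤ (d:ℝ) := by exact_mod_cast hd
      have hdp : (0:ℝ) < d := by linarith
      have hdp1 : (0:ℝ) < (d:ℝ) + 1 := by linarith
      have key : (1:ℝ)/((d:ℝ)+1)^2 + 1/((d:ℝ)+1) ≤ 1/(d:ℝ) := by
        rw [div_add_div _ _ (by positivity) (by positivity), div_le_div_iff₀ (by positivity) hdp]
        ring_nf
        nlinarith [sq_nonneg (d:ℝ)]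
      have := ih hd
      push_cast
      push_cast at this
      linarith
    · have hd0 : d = 0 := by omega
      subst hd0
      norm_num

lemma sum_inv_sq (d : ℕ) (hd : 1 ≤ d) : ∑ i ∈ Icc 1 d, (1:ℝ)/(i:ℝ)^2 ≤ 2 := by
  have := sum_inv_sq_aux d hd
  have : (0:ℝ) < d := by exact_mod_cast hd
  have h2 := sum_inv_sq_aux d hd
  have : (0:ℝ) ≤ 1/(d:ℝ) := by positivity
  linarith



lemma univariate (d m : ℕ) (hd : 1 ≤ d) (Q : Polynomial ℝ) (hdeg : Q.natDegree ≤ d)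
    (hb : ∀ t : ℕ, t ≤ m → |Q.eval (t:ℝ)| ≤ 4/3)
    (hj : 1/3 ≤ |Q.eval 1 - Q.eval 0|) : m ≤ 33 * d^2 := by
  by_cases hsmall : m < d^2
  · calc m ≤ d^2 := le_of_lt hsmall
      _ ≤ 33 * d^2 := by omega
  push_neg at hsmall
  set q : ℕ := m / d^2 with hq
  have hd2pos : 0 < d^2 := by positivity
  have hq1 : 1 ≤ q := by
    rw [hq, Nat.le_div_iff_mul_le hd2pos]; omega
  suffices hq32 : q ≤ 32 by
    have h1 := Nat.div_add_mod m (d^2)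
    have h2 := Nat.mod_lt m hd2pos
    have h3 : d^2 * (m / d^2) ≤ d^2 * 32 := Nat.mul_le_mul_left _ hq32
    omega
  -- real positivity facts
  have hqR : (1:ℝ) ≤ (q:ℝ) := by exact_mod_cast hq1
  have hqpos : (0:ℝ) < q := by linarith
  -- the node map
  set v : ℕ → ℝ := fun i => (((i^2 * q : ℕ) : ℝ)) with hv
  have hvcast : ∀ i : ℕ, v i = (i:ℝ)^2 * (q:ℝ) := by
    intro i; rw [hv]; push_cast; ring
  set s : Finset ℕ := Icc 1 d with hs
  have hcard : s.card = d := by rw [hs, Nat.card_Icc]; omega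
  have hinj : Set.InjOn v s := by
    intro i hi j hj hij
    simp only [hv] at hij
    have : (i^2 * q : ℕ) = (j^2 * q : ℕ) := by exact_mod_cast hij
    have h2 : i^2 = j^2 := Nat.eq_of_mul_eq_mul_right hq1 this
    exact Nat.pow_left_injective (by norm_num) h2
  -- divide out X
  obtain ⟨R, hR⟩ : (X : ℝ[X]) ∣ (Q - C (Q.eval 0)) := by
    rw [X_dvd_iff]
    simp [coeff_sub, coeff_zero_eq_eval_zero]
  have heval : ∀ t : ℝ, Q.eval t - Q.eval 0 = t * R.eval t := by
    intro t
    have := congrArg (Polynomial.eval t) hR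
    simpa using this
  have hR0 : R ≠ 0 := by
    intro h
    rw [h] at heval
    have := heval 1
    simp at this
    rw [this] at hj
    simp at hj
    linarith
  have hdegR : R.degree < (s.card : WithBot ℕ) := by
    have hXR : Q - C (Q.eval 0) ≠ 0 := by
      rw [hR]; exact mul_ne_zero Polynomial.X_ne_zero hR0
    have h1 : (Q - C (Q.eval 0)).natDegree ≤ d := by
      refine le_trans (Polynomial.natDegree_sub_le _ _) ?_
      simp [hdeg]
    have h2 : (Q - C (Q.eval 0)).natDegree = 1 + R.natDegree := by
      rw [hR, Polynomial.natDegree_mul Polynomial.X_ne_zero hR0, Polynomial.natDegree_X]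
    have h3 : R.natDegree < d := by omega
    calc R.degree ≤ (R.natDegree : WithBot ℕ) := Polynomial.degree_le_natDegree
      _ < (d : WithBot ℕ) := by exact_mod_cast h3
      _ = (s.card : WithBot ℕ) := by rw [hcard]
  have hkey : R = Lagrange.interpolate s v (fun i => R.eval (v i)) :=
    Lagrange.eq_interpolate hinj hdegR
  have hR1 : R.eval 1 = ∑ i ∈ s, R.eval (v i) * (Lagrange.basis s v i).eval 1 := by
    conv_lhs => rw [hkey]
    rw [Lagrange.interpolate_apply, Polynomial.eval_finset_sum]
    exact Finset.sum_congr rfl (fun i _ => by rw [Polynomial.eval_mul, Polynomial.eval_C])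
  -- termwise bounds
  have hterm : ∀ i ∈ s, |R.eval (v i) * (Lagrange.basis s v i).eval 1| ≤
      (16/3) * (1/(q:ℝ)) * (1/(i:ℝ)^2) := by
    intro i hi
    rw [hs, mem_Icc] at hi
    obtain ⟨hi1, hid⟩ := hi
    have hiR : (1:ℝ) ≤ (i:ℝ) := by exact_mod_cast hi1
    have hvpos : (0:ℝ) < v i := by rw [hvcast]; positivity
    -- bound on |R.eval (v i)|
    have hnode : i^2 * q ≤ m := by
      calc i^2 * q ≤ d^2 * q := by
            have : i^2 ≤ d^2 := Nat.pow_le_pow_left hid 2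
            exact Nat.mul_le_mul_right _ this
        _ = (m / d^2) * d^2 := by rw [hq]; ring
        _ ≤ m := Nat.div_mul_le_self m (d^2)
    have hQv : |Q.eval (v i)| ≤ 4/3 := by
      rw [hv]; exact hb _ hnode
    have hQ0 : |Q.eval 0| ≤ 4/3 := by
      have := hb 0 (Nat.zero_le m)
      simpa using this
    have hRv : |R.eval (v i)| ≤ (8/3) / (v i) := by
      rw [le_div_iff₀ hvpos]
      have h := heval (v i)
      have : |v i * R.eval (v i)| ≤ 8/3 := by
        rw [← h]
        calc |Q.eval (v i) - Q.eval 0| ≤ |Q.eval (v i)| + |Q.eval 0| := abs_sub _ _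
          _ ≤ 8/3 := by linarith
      calc |R.eval (v i)| * v i = |v i * R.eval (v i)| := by
            rw [abs_mul, abs_of_pos hvpos]; ring
        _ ≤ 8/3 := this
    -- bound on basis polynomial value
    have hbasis : |(Lagrange.basis s v i).eval 1| ≤ 2 := by
      have hbe : (Lagrange.basis s v i).eval 1 =
          ∏ j ∈ s.erase i, ((v i - v j)⁻¹ * (1 - v j)) := by
        rw [Lagrange.basis, Polynomial.eval_prod]
        exact Finset.prod_congr rfl (fun j _ => by
          simp [Lagrange.basisDivisor])
      rw [hbe, abs_prod]
      set w : ℕ → ℕ := fun j => ((i-j)+(j-i)) * (i + j) with hw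
      have hwpos : ∀ j ∈ s.erase i, 0 < w j := by
        intro j hj
        rw [hs, mem_erase, mem_Icc] at hj
        rw [hw]
        have : i ≠ j := fun h => hj.1 (h.symm)
        rcases Nat.lt_or_ge i j with h | h
        · have : 0 < j - i := by omega
          positivity
        · have hij : j < i := by omega
          have : 0 < i - j := by omega
          positivity
      have hfac : ∀ j ∈ s.erase i, |(v i - v j)⁻¹ * (1 - v j)| ≤ (j:ℝ)^2 / (w j : ℝ) := by
        intro j hj
        have hjm := hj
        rw [hs, mem_erase, mem_Icc] at hjm
        obtain ⟨hne, hj1, hjd⟩ := hjm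
        have hj1R : (1:ℝ) ≤ (j:ℝ) := by exact_mod_cast hj1
        have hvj : (1:ℝ) ≤ v j := by
          rw [hvcast]
          nlinarith
        have hnum : |1 - v j| ≤ (j:ℝ)^2 * q := by
          rw [abs_of_nonpos (by linarith), hvcast]
          linarith [hvcast j ▸ hvj]
        have hdenom : |v i - v j| = (q:ℝ) * (w j : ℝ) := by
          rw [hvcast, hvcast]
          simp only [hw]
          rcases Nat.lt_or_ge j i with h | h
          · have h1 : i - j + (j - i) = i - j := by omega
            rw [h1]
            have hji : (j:ℝ) < (i:ℝ) := by exact_mod_cast h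
            have hsq : (j:ℝ)^2 < (i:ℝ)^2 := by nlinarith [hj1R]
            have hpos : (0:ℝ) < ((i:ℝ)^2 - (j:ℝ)^2) * q := by
              apply mul_pos (by linarith) hqpos
            rw [show (i:ℝ)^2 * q - (j:ℝ)^2 * q = ((i:ℝ)^2 - (j:ℝ)^2) * q from by ring,
              abs_of_pos hpos]
            push_cast [Nat.cast_sub h.le]
            ring
          · have hlt : i < j := by omega
            have h1 : i - j + (j - i) = j - i := by omega
            rw [h1]
            have hji : (i:ℝ) < (j:ℝ) := by exact_mod_cast hlt
            have hsq : (i:ℝ)^2 < (j:ℝ)^2 := by nlinarith [hiR]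
            have hneg : (i:ℝ)^2 * q - (j:ℝ)^2 * q < 0 := by
              have : ((i:ℝ)^2 - (j:ℝ)^2) * q < 0 :=
                mul_neg_of_neg_of_pos (by linarith) hqpos
              nlinarith
            rw [abs_of_neg hneg]
            push_cast [Nat.cast_sub hlt.le]
            ring
        have hwp : (0:ℝ) < (w j : ℝ) := by exact_mod_cast hwpos j hj
        rw [abs_mul, abs_inv, hdenom]
        calc ((q:ℝ) * (w j:ℝ))⁻¹ * |1 - v j| ≤ ((q:ℝ) * (w j:ℝ))⁻¹ * ((j:ℝ)^2 * q) := by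
              apply mul_le_mul_of_nonneg_left hnum
              positivity
          _ = (j:ℝ)^2 / (w j : ℝ) := by
              field_simp
      calc ∏ j ∈ s.erase i, |(v i - v j)⁻¹ * (1 - v j)|
          ≤ ∏ j ∈ s.erase i, ((j:ℝ)^2 / (w j : ℝ)) := by
            apply Finset.prod_le_prod
            · intro j _; positivity
            · exact hfac
        _ = ((∏ j ∈ s.erase i, j^2 : ℕ) : ℝ) / ((∏ j ∈ s.erase i, w j : ℕ) : ℝ) := by
            rw [Finset.prod_div_distrib]
            push_cast
            rfl

        _ ≤ 2 := by
            have hnat := natT d i hi1 hid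
            have hwprodpos : (0:ℝ) < ((∏ j ∈ s.erase i, w j : ℕ) : ℝ) := by
              have : 0 < ∏ j ∈ s.erase i, w j := Finset.prod_pos hwpos
              exact_mod_cast this
            rw [div_le_iff₀ hwprodpos]
            have : ((∏ j ∈ s.erase i, j^2 : ℕ) : ℝ) ≤ 2 * ((∏ j ∈ s.erase i, w j : ℕ) : ℝ) := by
              exact_mod_cast hnat
            linarith
    calc |R.eval (v i) * (Lagrange.basis s v i).eval 1|
        = |R.eval (v i)| * |(Lagrange.basis s v i).eval 1| := abs_mul _ _
      _ ≤ ((8/3) / (v i)) * 2 := by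
          apply mul_le_mul hRv hbasis (abs_nonneg _)
          positivity
      _ = (16/3) * (1/(q:ℝ)) * (1/(i:ℝ)^2) := by
          rw [hvcast]
          field_simp
          ring
  -- sum up
  have hsum : |R.eval 1| ≤ 32 / (3 * q) := by
    rw [hR1]
    calc |∑ i ∈ s, R.eval (v i) * (Lagrange.basis s v i).eval 1|
        ≤ ∑ i ∈ s, |R.eval (v i) * (Lagrange.basis s v i).eval 1| :=
          Finset.abs_sum_le_sum_abs _ _
      _ ≤ ∑ i ∈ s, (16/3) * (1/(q:ℝ)) * (1/(i:ℝ)^2) := Finset.sum_le_sum hterm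
      _ = (16/3) * (1/(q:ℝ)) * ∑ i ∈ s, (1:ℝ)/(i:ℝ)^2 := by
          rw [Finset.mul_sum]
      _ ≤ (16/3) * (1/(q:ℝ)) * 2 := by
          apply mul_le_mul_of_nonneg_left (sum_inv_sq d hd)
          positivity
      _ = 32 / (3 * q) := by field_simp; ring
  have hjump : 1/3 ≤ 32 / (3 * (q:ℝ)) := by
    have h1 := heval 1
    rw [h1, one_mul] at hj
    exact le_trans hj hsum
  have : (q:ℝ) ≤ 32 := by
    rw [div_le_div_iff₀ (by norm_num) (by positivity)] at hjump
    linarith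
  exact_mod_cast this


noncomputable def indE {k : ℕ} (W : Finset (Fin k)) : Fin k → Bool := fun j => decide (j ∈ W)

lemma prod_ind {k : ℕ} (W U : Finset (Fin k)) :
    (∏ j ∈ U, (if indE W j then (1:ℝ) else 0)) = if U ⊆ W then 1 else 0 := by
  by_cases h : U ⊆ W
  · rw [if_pos h]
    apply Finset.prod_eq_one
    intro j hj
    simp [indE, h hj]
  · rw [if_neg h]
    obtain ⟨j, hj, hjw⟩ := Finset.not_subset.mp h
    refine Finset.prod_eq_zero hj ?_
    simp [indE, hjw]

lemma mlEval_ind {k : ℕ} (a : Finset (Fin k) → ℝ) (W : Finset (Fin k)) :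
    mlEval a (indE W) = ∑ U ∈ W.powerset, a U := by
  unfold mlEval
  have h1 : ∀ U : Finset (Fin k),
      a U * ∏ j ∈ U, (if indE W j then (1:ℝ) else 0) = if U ⊆ W then a U else 0 := by
    intro U
    rw [prod_ind]
    by_cases h : U ⊆ W <;> simp [h]
  rw [Finset.sum_congr rfl (fun U _ => h1 U), ← Finset.sum_filter]
  congr 1
  ext U
  simp [Finset.mem_powerset]

lemma exists_exact {n : ℕ} (f : (Fin n → Bool) → Bool) :
    ∃ a : Finset (Fin n) → ℝ, ∀ x, mlEval a x = toRealFn f x := by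
  set F : Finset (Fin n) → ℝ := fun T => toRealFn f (indE T) with hF
  refine ⟨fun S => ∑ T ∈ S.powerset, (-1:ℝ)^(S.card - T.card) * F T, fun x => ?_⟩
  have hx : x = indE (univ.filter (fun i => x i)) := by
    funext i
    simp [indE]
  rw [hx]
  set W := univ.filter (fun i => x i) with hW
  rw [mlEval_ind]
  have hFx : toRealFn f (indE W) = F W := rfl
  rw [hFx]
  have e1 : ∀ S ∈ W.powerset, ∑ T ∈ S.powerset, (-1:ℝ)^(S.card - T.card) * F T
      = ∑ T ∈ W.powerset, if T ⊆ S then (-1:ℝ)^(S.card - T.card) * F T else 0 := by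
    intro S hS
    rw [Finset.mem_powerset] at hS
    rw [← Finset.sum_filter]
    apply Finset.sum_congr _ (fun _ _ => rfl)
    ext T
    simp only [Finset.mem_filter, Finset.mem_powerset]
    exact ⟨fun h => ⟨h.trans hS, h⟩, fun h => h.2⟩
  rw [Finset.sum_congr rfl e1, Finset.sum_comm]
  have inner : ∀ T ∈ W.powerset,
      (∑ S ∈ W.powerset, if T ⊆ S then (-1:ℝ)^(S.card - T.card) * F T else 0)
        = (if T = W then 1 else 0) * F T := by
    intro T hT
    rw [Finset.mem_powerset] at hT
    rw [Finset.sum_ite, Finset.sum_const_zero, add_zero, ← Finset.sum_mul]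
    congr 1
    have hbij : ∑ S ∈ W.powerset.filter (fun S => T ⊆ S), (-1:ℝ)^(S.card - T.card)
        = ∑ V ∈ (W \ T).powerset, (-1:ℝ)^V.card := by
      refine Finset.sum_bij' (fun S _ => S \ T) (fun V _ => V ∪ T) ?_ ?_ ?_ ?_ ?_
      · intro S hS
        rw [Finset.mem_filter, Finset.mem_powerset] at hS
        rw [Finset.mem_powerset]
        exact Finset.sdiff_subset_sdiff hS.1 le_rfl
      · intro V hV
        rw [Finset.mem_powerset] at hV
        rw [Finset.mem_filter, Finset.mem_powerset]
        exact ⟨Finset.union_subset (hV.trans Finset.sdiff_subset) hT,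
          Finset.subset_union_right⟩
      · intro S hS
        rw [Finset.mem_filter, Finset.mem_powerset] at hS
        exact Finset.sdiff_union_of_subset hS.2
      · intro V hV
        rw [Finset.mem_powerset] at hV
        exact Finset.union_sdiff_cancel_right
          (Finset.disjoint_of_subset_left hV (Finset.sdiff_disjoint (t := W) (s := T)))
      · intro S hS
        rw [Finset.mem_filter, Finset.mem_powerset] at hS
        rw [Finset.card_sdiff_of_subset hS.2]
    rw [hbij]
    have hcast : ∑ V ∈ (W \ T).powerset, (-1:ℝ)^V.card
        = (((∑ V ∈ (W \ T).powerset, (-1:ℤ)^V.card : ℤ)) : ℝ) := by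
      push_cast
      rfl
    rw [hcast, Finset.sum_powerset_neg_one_pow_card]
    by_cases h : T = W
    · subst h
      simp
    · have hne : W \ T ≠ ∅ := by
        intro hc
        refine h ?_
        have hcard := Finset.card_sdiff_of_subset hT
        rw [hc, Finset.card_empty] at hcard
        have hle := Finset.card_le_card hT
        exact Finset.eq_of_subset_of_card_le hT (by omega)
      simp [h, hne]
  rw [Finset.sum_congr rfl inner]
  rw [Finset.sum_eq_single_of_mem W (Finset.mem_powerset.mpr le_rfl)]
  · simp
  · intro T _ hTW
    simp [hTW]

section Reduction
variable {n k : ℕ} (x : Fin n → Bool) (B : Fin k → Finset (Fin n))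

noncomputable def Pt (y : Fin k → Bool) : Fin n → Bool :=
  flipUp x ((univ.filter (fun j => y j)).biUnion B)

noncomputable def betaMap (S : Finset (Fin n)) : Finset (Fin k) :=
  univ.filter (fun j => (S ∩ B j).Nonempty)

noncomputable def Dall : Finset (Fin n) := univ.biUnion B

noncomputable def ared (a : Finset (Fin n) → ℝ) (U : Finset (Fin k)) : ℝ :=
  ∑ S ∈ univ.filter (fun S => betaMap B S = U),
    a S * ∏ i ∈ S \ Dall B, (if x i then (1:ℝ) else 0)

lemma Pt_false : Pt x B (fun _ => false) = x := by
  funext i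
  simp [Pt, flipUp]

lemma Pt_single (j : Fin k) : Pt x B (indE {j}) = flipUp x (B j) := by
  funext i
  have : (univ.filter (fun j' => indE {j} j')) = {j} := by
    ext j'
    simp [indE]
  simp [Pt, this]

lemma mono_split (hx : ∀ j, ∀ i ∈ B j, x i = false)
    (hdisj : Pairwise fun j j' => Disjoint (B j) (B j'))
    (y : Fin k → Bool) (S : Finset (Fin n)) :
    (∏ i ∈ S \ Dall B, (if x i then (1:ℝ) else 0)) *
      (∏ j ∈ betaMap B S, (if y j then (1:ℝ) else 0))
      = ∏ i ∈ S, (if Pt x B y i then (1:ℝ) else 0) := by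
  have hPt : ∀ j : Fin k, ∀ i ∈ B j, Pt x B y i = y j := by
    intro j i hi
    by_cases hyj : y j
    · have : i ∈ (univ.filter (fun j' => y j')).biUnion B := by
        rw [Finset.mem_biUnion]
        exact ⟨j, by simp [hyj], hi⟩
      simp [Pt, flipUp, this, hyj]
    · have hni : i ∉ (univ.filter (fun j' => y j')).biUnion B := by
        rw [Finset.mem_biUnion]
        rintro ⟨j', hj', hij'⟩
        simp only [Finset.mem_filter] at hj'
        by_cases hjj : j' = j
        · subst hjj; exact hyj hj'.2
        · exact (Finset.disjoint_left.mp (hdisj hjj) hij') hi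
      have : Pt x B y i = x i := by simp [Pt, flipUp, hni]
      rw [this, hx j i hi]
      simp [hyj]
  have houtside : ∀ i ∈ S \ Dall B, Pt x B y i = x i := by
    intro i hi
    rw [Finset.mem_sdiff] at hi
    have hni : i ∉ (univ.filter (fun j' => y j')).biUnion B := by
      intro hmem
      rw [Finset.mem_biUnion] at hmem
      obtain ⟨j', _, hij'⟩ := hmem
      exact hi.2 (Finset.mem_biUnion.mpr ⟨j', Finset.mem_univ _, hij'⟩)
    simp [Pt, flipUp, hni]
  -- split the RHS product
  have hsp := Finset.prod_filter_mul_prod_filter_not S (· ∈ Dall B)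
    (fun i => if Pt x B y i then (1:ℝ) else 0)
  have hfilter_not : S.filter (· ∉ Dall B) = S \ Dall B := (Finset.sdiff_eq_filter S _).symm
  have hpart : S.filter (· ∈ Dall B) = (betaMap B S).biUnion (fun j => S ∩ B j) := by
    ext i
    constructor
    · intro hi
      rw [Finset.mem_filter] at hi
      obtain ⟨hiS, hiD⟩ := hi
      rw [Dall, Finset.mem_biUnion] at hiD
      obtain ⟨j, -, hij⟩ := hiD
      rw [Finset.mem_biUnion]
      refine ⟨j, ?_, Finset.mem_inter.mpr ⟨hiS, hij⟩⟩
      rw [betaMap, Finset.mem_filter]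
      exact ⟨Finset.mem_univ _, ⟨i, Finset.mem_inter.mpr ⟨hiS, hij⟩⟩⟩
    · intro hi
      rw [Finset.mem_biUnion] at hi
      obtain ⟨j, -, hij⟩ := hi
      rw [Finset.mem_inter] at hij
      rw [Finset.mem_filter]
      exact ⟨hij.1, by rw [Dall, Finset.mem_biUnion]; exact ⟨j, Finset.mem_univ _, hij.2⟩⟩
  have hdisj2 : (↑(betaMap B S) : Set (Fin k)).PairwiseDisjoint (fun j => S ∩ B j) := by
    intro j _ j' _ hjj
    exact Finset.disjoint_of_subset_left Finset.inter_subset_right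
      (Finset.disjoint_of_subset_right Finset.inter_subset_right (hdisj hjj))
  have hinner : ∀ j ∈ betaMap B S,
      ∏ i ∈ S ∩ B j, (if Pt x B y i then (1:ℝ) else 0) = (if y j then (1:ℝ) else 0) := by
    intro j hj
    have hcongr : ∀ i ∈ S ∩ B j, (if Pt x B y i then (1:ℝ) else 0)
        = (if y j then (1:ℝ) else 0) := by
      intro i hi
      rw [Finset.mem_inter] at hi
      rw [hPt j i hi.2]
    rw [Finset.prod_congr rfl hcongr, Finset.prod_const]
    have hpos : (S ∩ B j).card ≠ 0 := by
      rw [betaMap, Finset.mem_filter] at hj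
      exact Finset.card_ne_zero_of_mem (hj.2.choose_spec)
    by_cases hyj : y j <;> simp [hyj, zero_pow hpos]
  have h1 : ∏ j ∈ betaMap B S, ∏ i ∈ S ∩ B j, (if Pt x B y i then (1:ℝ) else 0)
      = ∏ j ∈ betaMap B S, (if y j then (1:ℝ) else 0) := Finset.prod_congr rfl hinner
  have h2 : ∏ i ∈ S \ Dall B, (if Pt x B y i then (1:ℝ) else 0)
      = ∏ i ∈ S \ Dall B, (if x i then (1:ℝ) else 0) :=
    Finset.prod_congr rfl (fun i hi => by rw [houtside i hi])
  calc (∏ i ∈ S \ Dall B, (if x i then (1:ℝ) else 0)) *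
        (∏ j ∈ betaMap B S, (if y j then (1:ℝ) else 0))
      = (∏ j ∈ betaMap B S, ∏ i ∈ S ∩ B j, (if Pt x B y i then (1:ℝ) else 0)) *
        (∏ i ∈ S \ Dall B, (if Pt x B y i then (1:ℝ) else 0)) := by
        rw [h1, h2]; ring
    _ = (∏ i ∈ S.filter (· ∈ Dall B), (if Pt x B y i then (1:ℝ) else 0)) *
        (∏ i ∈ S.filter (· ∉ Dall B), (if Pt x B y i then (1:ℝ) else 0)) := by
        rw [hfilter_not, hpart, Finset.prod_biUnion hdisj2]
    _ = ∏ i ∈ S, (if Pt x B y i then (1:ℝ) else 0) := hsp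

lemma ared_eval (a : Finset (Fin n) → ℝ)
    (hx : ∀ j, ∀ i ∈ B j, x i = false)
    (hdisj : Pairwise fun j j' => Disjoint (B j) (B j'))
    (y : Fin k → Bool) :
    mlEval (ared x B a) y = mlEval a (Pt x B y) := by
  unfold mlEval ared
  rw [Finset.sum_congr rfl (fun U _ => Finset.sum_mul _ _ _)]
  have hcongr : ∀ U : Finset (Fin k), ∀ S ∈ univ.filter (fun S => betaMap B S = U),
      (a S * ∏ i ∈ S \ Dall B, (if x i then (1:ℝ) else 0)) *
        ∏ j ∈ U, (if y j then (1:ℝ) else 0)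
      = a S * ∏ i ∈ S, (if Pt x B y i then (1:ℝ) else 0) := by
    intro U S hS
    rw [Finset.mem_filter] at hS
    rw [← hS.2, mul_assoc, mono_split x B hx hdisj y S]
  rw [Finset.sum_congr rfl (fun U _ => Finset.sum_congr rfl (hcongr U))]
  exact Finset.sum_fiberwise_of_maps_to (fun S _ => Finset.mem_univ (betaMap B S)) _

lemma ared_supp (a : Finset (Fin n) → ℝ) :
    (univ.filter (fun U => ared x B a U ≠ 0)).card
      ≤ (univ.filter (fun S => a S ≠ 0)).card := by
  have hsub : univ.filter (fun U => ared x B a U ≠ 0)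
      ⊆ (univ.filter (fun S => a S ≠ 0)).image (betaMap B) := by
    intro U hU
    rw [Finset.mem_filter] at hU
    obtain ⟨S, hS, hSne⟩ := Finset.exists_ne_zero_of_sum_ne_zero hU.2
    rw [Finset.mem_filter] at hS
    rw [Finset.mem_image]
    refine ⟨S, ?_, hS.2⟩
    rw [Finset.mem_filter]
    refine ⟨Finset.mem_univ _, ?_⟩
    intro h0
    rw [h0] at hSne
    simp at hSne
  calc (univ.filter (fun U => ared x B a U ≠ 0)).card
      ≤ ((univ.filter (fun S => a S ≠ 0)).image (betaMap B)).card := Finset.card_le_card hsub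
    _ ≤ (univ.filter (fun S => a S ≠ 0)).card := Finset.card_image_le

end Reduction

section Counting
variable {k : ℕ}

lemma card_supersets (U : Finset (Fin k)) :
    (univ.filter (fun L : Finset (Fin k) => U ⊆ L)).card = 2^(k - U.card) := by
  have hbij : (univ.filter (fun L : Finset (Fin k) => U ⊆ L)).card
      = ((univ \ U : Finset (Fin k)).powerset).card := by
    refine Finset.card_bij' (fun L _ => L \ U) (fun V _ => V ∪ U) ?_ ?_ ?_ ?_
    · intro L hL
      rw [Finset.mem_filter] at hL
      rw [Finset.mem_powerset]
      exact Finset.sdiff_subset_sdiff (Finset.subset_univ _) le_rfl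
    · intro V hV
      rw [Finset.mem_powerset] at hV
      rw [Finset.mem_filter]
      exact ⟨Finset.mem_univ _, Finset.subset_union_right⟩
    · intro L hL
      rw [Finset.mem_filter] at hL
      exact Finset.sdiff_union_of_subset hL.2
    · intro V hV
      rw [Finset.mem_powerset] at hV
      exact Finset.union_sdiff_cancel_right
        (Finset.disjoint_of_subset_left hV (Finset.sdiff_disjoint (t := univ) (s := U)))
  rw [hbij, Finset.card_powerset, Finset.card_sdiff_of_subset (Finset.subset_univ _), Finset.card_univ,
    Fintype.card_fin]

lemma exists_live {s d : ℕ} (hdk : d < k) (𝒰 : Finset (Finset (Fin k)))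
    (hs : 𝒰.card ≤ s) (hsd : s < 2^d)
    (hbig : ∀ U ∈ 𝒰, d < U.card) :
    ∃ L : Finset (Fin k), k ≤ 2 * L.card ∧ ∀ U ∈ 𝒰, ¬ U ⊆ L := by
  classical
  set bad1 : Finset (Finset (Fin k)) := univ.filter (fun L => ∃ U ∈ 𝒰, U ⊆ L) with hbad1
  set bad2 : Finset (Finset (Fin k)) := univ.filter (fun L => 2 * L.card < k) with hbad2
  have hb1 : bad1.card < 2^(k-1) := by
    have hsub : bad1 ⊆ 𝒰.biUnion (fun U => univ.filter (fun L => U ⊆ L)) := by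
      intro L hL
      rw [hbad1, Finset.mem_filter] at hL
      obtain ⟨-, U, hU, hUL⟩ := hL
      rw [Finset.mem_biUnion]
      exact ⟨U, hU, by rw [Finset.mem_filter]; exact ⟨Finset.mem_univ _, hUL⟩⟩
    calc bad1.card ≤ ∑ U ∈ 𝒰, (univ.filter (fun L : Finset (Fin k) => U ⊆ L)).card :=
          le_trans (Finset.card_le_card hsub) (Finset.card_biUnion_le)
      _ ≤ ∑ _U ∈ 𝒰, 2^(k-d-1) := by
          apply Finset.sum_le_sum
          intro U hU
          rw [card_supersets]
          apply Nat.pow_le_pow_right (by norm_num)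
          have := hbig U hU
          omega
      _ = 𝒰.card * 2^(k-d-1) := by rw [Finset.sum_const, smul_eq_mul]
      _ ≤ s * 2^(k-d-1) := Nat.mul_le_mul_right _ hs
      _ < 2^d * 2^(k-d-1) := by
          have hp : 0 < 2^(k-d-1) := Nat.pow_pos (by norm_num)
          exact (Nat.mul_lt_mul_right hp).mpr hsd
      _ = 2^(k-1) := by
          rw [← pow_add]
          congr 1
          omega
  have hb2 : bad2.card ≤ 2^(k-1) := by
    have himg : bad2.image compl ⊆ univ.filter (fun L : Finset (Fin k) => k < 2 * L.card) := by
      intro L hL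
      rw [Finset.mem_image] at hL
      obtain ⟨M, hM, rfl⟩ := hL
      rw [hbad2, Finset.mem_filter] at hM
      rw [Finset.mem_filter]
      refine ⟨Finset.mem_univ _, ?_⟩
      have : Mᶜ.card = k - M.card := by
        rw [Finset.card_compl, Fintype.card_fin]
      omega
    have hdisj : Disjoint bad2 (bad2.image compl) := by
      rw [Finset.disjoint_left]
      intro L hL hL'
      have h1 : 2 * L.card < k := by
        rw [hbad2, Finset.mem_filter] at hL; exact hL.2
      have h2 : k < 2 * L.card := by
        have := himg hL'
        rw [Finset.mem_filter] at this
        exact this.2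
      omega
    have hcardimg : (bad2.image compl).card = bad2.card :=
      Finset.card_image_of_injective _ compl_injective
    have htot : bad2.card + (bad2.image compl).card ≤ 2^k := by
      rw [← Finset.card_union_of_disjoint hdisj]
      calc (bad2 ∪ bad2.image compl).card ≤ (univ : Finset (Finset (Fin k))).card :=
            Finset.card_le_card (Finset.subset_univ _)
        _ = 2^k := by rw [Finset.card_univ, Fintype.card_finset, Fintype.card_fin]
    have hk1 : 2^k = 2 * 2^(k-1) := by
      rw [← _root_.pow_succ']
      congr 1
      omega
    omega
  have hx : bad1.card + bad2.card < 2^k := by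
    have hk1 : 2^k = 2^(k-1) + 2^(k-1) := by
      have : 2^k = 2 * 2^(k-1) := by
        rw [← _root_.pow_succ']
        congr 1
        omega
      omega
    omega
  have hne : (bad1 ∪ bad2) ≠ univ := by
    intro hc
    have h1 : (bad1 ∪ bad2).card ≤ bad1.card + bad2.card := Finset.card_union_le _ _
    rw [hc, Finset.card_univ, Fintype.card_finset, Fintype.card_fin] at h1
    omega
  obtain ⟨L, hL⟩ : ∃ L : Finset (Fin k), L ∉ bad1 ∪ bad2 := by
    by_contra hc
    push_neg at hc
    exact hne (Finset.eq_univ_iff_forall.mpr (fun L => hc L))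
  rw [Finset.mem_union, not_or] at hL
  obtain ⟨hL1, hL2⟩ := hL
  rw [hbad1, Finset.mem_filter] at hL1
  rw [hbad2, Finset.mem_filter] at hL2
  push_neg at hL1 hL2
  exact ⟨L, by
    constructor
    · have := hL2 (Finset.mem_univ _)
      omega
    · exact hL1 (Finset.mem_univ _)⟩

end Counting

section Symm
open Nat
variable {k : ℕ}

lemma choose_id (m t u : ℕ) (hut : u ≤ t) (htm : t ≤ m) :
    m.choose t * t.choose u = m.choose u * (m-u).choose (t-u) := by
  have hum : u ≤ m := le_trans hut htm
  have hpos : 0 < u ! * ((t-u)! * (m-t)!) := by positivity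
  apply Nat.eq_of_mul_eq_mul_right hpos
  have h1 : m.choose t * t.choose u * (u ! * ((t-u)! * (m-t)!))
      = m.choose t * (t.choose u * u ! * (t-u)!) * (m-t)! := by ring
  have h2 : m.choose u * (m-u).choose (t-u) * (u ! * ((t-u)! * (m-t)!))
      = m.choose u * u ! * ((m-u).choose (t-u) * (t-u)! * (m-t)!) := by ring
  rw [h1, h2, Nat.choose_mul_factorial_mul_factorial hut]
  have h3 : (m - u) - (t - u) = m - t := by omega
  have h4 : (m-u).choose (t-u) * (t-u)! * (m-t)! = (m-u)! := by
    rw [← h3]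
    exact Nat.choose_mul_factorial_mul_factorial (by omega)
  rw [h4]
  have h5 : m.choose t * t ! * (m-t)! = m ! := Nat.choose_mul_factorial_mul_factorial htm
  have h6 : m.choose u * u ! * (m-u)! = m ! := Nat.choose_mul_factorial_mul_factorial hum
  calc m.choose t * t ! * (m-t)! = m ! := h5
    _ = m.choose u * u ! * (m-u)! := h6.symm

lemma count_W (L U : Finset (Fin k)) (hUL : U ⊆ L) (t : ℕ) (htu : U.card ≤ t) :
    ((Finset.powersetCard t L).filter (fun W => U ⊆ W)).card
      = (L.card - U.card).choose (t - U.card) := by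
  have hbij : ((Finset.powersetCard t L).filter (fun W => U ⊆ W)).card
      = (Finset.powersetCard (t - U.card) (L \ U)).card := by
    refine Finset.card_bij' (fun W _ => W \ U) (fun V _ => V ∪ U) ?_ ?_ ?_ ?_
    · intro W hW
      rw [Finset.mem_filter, Finset.mem_powersetCard] at hW
      obtain ⟨⟨hWL, hWc⟩, hUW⟩ := hW
      rw [Finset.mem_powersetCard]
      exact ⟨Finset.sdiff_subset_sdiff hWL le_rfl, by rw [Finset.card_sdiff_of_subset hUW, hWc]⟩
    · intro V hV
      rw [Finset.mem_powersetCard] at hV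
      obtain ⟨hVL, hVc⟩ := hV
      have hdisjVU : Disjoint V U :=
        Finset.disjoint_of_subset_left hVL (Finset.sdiff_disjoint (t := L) (s := U))
      rw [Finset.mem_filter, Finset.mem_powersetCard]
      refine ⟨⟨Finset.union_subset (hVL.trans Finset.sdiff_subset) hUL, ?_⟩,
        Finset.subset_union_right⟩
      rw [Finset.card_union_of_disjoint hdisjVU, hVc]
      omega
    · intro W hW
      rw [Finset.mem_filter] at hW
      exact Finset.sdiff_union_of_subset hW.2
    · intro V hV
      rw [Finset.mem_powersetCard] at hV
      exact Finset.union_sdiff_cancel_right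
        (Finset.disjoint_of_subset_left hV.1 (Finset.sdiff_disjoint (t := L) (s := U)))
  rw [hbij, Finset.card_powersetCard, Finset.card_sdiff_of_subset hUL]

lemma count_W0 (L U : Finset (Fin k)) (t : ℕ) (htu : t < U.card) :
    ((Finset.powersetCard t L).filter (fun W => U ⊆ W)) = ∅ := by
  rw [Finset.eq_empty_iff_forall_notMem]
  intro W hW
  rw [Finset.mem_filter, Finset.mem_powersetCard] at hW
  have := Finset.card_le_card hW.2
  omega

lemma count_W_nsub (L U : Finset (Fin k)) (hUL : ¬ U ⊆ L) (t : ℕ) :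
    ((Finset.powersetCard t L).filter (fun W => U ⊆ W)) = ∅ := by
  rw [Finset.eq_empty_iff_forall_notMem]
  intro W hW
  rw [Finset.mem_filter, Finset.mem_powersetCard] at hW
  exact hUL (hW.2.trans hW.1.1)

noncomputable def Qpoly (a' : Finset (Fin k) → ℝ) (L : Finset (Fin k)) : Polynomial ℝ :=
  ∑ U ∈ univ.filter (fun U : Finset (Fin k) => U ⊆ L),
    Polynomial.C (a' U / ((L.card.choose U.card) * (U.card)!)) * descPochhammer ℝ U.card

lemma Qpoly_natDegree {a' : Finset (Fin k) → ℝ} {L : Finset (Fin k)} {d : ℕ}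
    (hd : ∀ U : Finset (Fin k), a' U ≠ 0 → U ⊆ L → U.card ≤ d) :
    (Qpoly a' L).natDegree ≤ d := by
  apply Polynomial.natDegree_sum_le_of_forall_le
  intro U hU
  rw [Finset.mem_filter] at hU
  by_cases h0 : a' U = 0
  · simp [h0]
  · calc (Polynomial.C (a' U / ((L.card.choose U.card) * (U.card)!)) *
          descPochhammer ℝ U.card).natDegree
        ≤ (descPochhammer ℝ U.card).natDegree := Polynomial.natDegree_C_mul_le _ _
      _ = U.card := descPochhammer_natDegree ℝ U.card
      _ ≤ d := hd U h0 hU.2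

lemma Qpoly_eval {a' : Finset (Fin k) → ℝ} {L : Finset (Fin k)} (t : ℕ) (ht : t ≤ L.card) :
    (L.card.choose t : ℝ) * (Qpoly a' L).eval (t : ℝ)
      = ∑ W ∈ Finset.powersetCard t L, mlEval a' (indE W) := by
  set m := L.card with hm
  -- RHS
  have h1 : ∀ W ∈ Finset.powersetCard t L, mlEval a' (indE W)
      = ∑ U : Finset (Fin k), if U ⊆ W then a' U else 0 := by
    intro W _
    rw [mlEval_ind]
    rw [show W.powerset = univ.filter (fun U => U ⊆ W) from by ext U; simp [Finset.mem_powerset],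
      Finset.sum_filter]
  have hRHS : ∑ W ∈ Finset.powersetCard t L, mlEval a' (indE W)
      = ∑ U : Finset (Fin k),
          a' U * (((Finset.powersetCard t L).filter (fun W => U ⊆ W)).card : ℝ) := by
    rw [Finset.sum_congr rfl h1, Finset.sum_comm]
    apply Finset.sum_congr rfl
    intro U _
    rw [Finset.sum_ite, Finset.sum_const_zero, add_zero, Finset.sum_const, nsmul_eq_mul]
    ring
  rw [hRHS]
  -- LHS
  unfold Qpoly
  rw [Polynomial.eval_finset_sum, Finset.mul_sum]
  have hterm : ∀ U ∈ univ.filter (fun U : Finset (Fin k) => U ⊆ L),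
      (m.choose t : ℝ) * Polynomial.eval (t:ℝ)
          (Polynomial.C (a' U / ((L.card.choose U.card) * (U.card)!)) *
            descPochhammer ℝ U.card)
        = a' U * (((Finset.powersetCard t L).filter (fun W => U ⊆ W)).card : ℝ) := by
    intro U hU
    rw [Finset.mem_filter] at hU
    obtain ⟨-, hUL⟩ := hU
    set u := U.card with hu
    have hum : u ≤ m := hm ▸ Finset.card_le_card hUL
    rw [Polynomial.eval_mul, Polynomial.eval_C, descPochhammer_eval_eq_descFactorial]
    by_cases hut : u ≤ t
    · rw [count_W L U hUL t hut]
      have hc1 : (m.choose u : ℝ) ≠ 0 := by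
        have := Nat.choose_pos hum
        positivity
      have hc2 : ((u)! : ℝ) ≠ 0 := by
        have := Nat.factorial_pos u
        positivity
      have hdf : (t.descFactorial u : ℝ) = (u)! * t.choose u := by
        exact_mod_cast congrArg (Nat.cast : ℕ → ℝ) (Nat.descFactorial_eq_factorial_mul_choose t u)
      rw [hdf]
      have hkey : (m.choose t : ℝ) * (t.choose u) = (m.choose u) * ((m-u).choose (t-u)) := by
        exact_mod_cast congrArg (Nat.cast : ℕ → ℝ) (choose_id m t u hut (hm ▸ ht))
      rw [← hm]
      field_simp
      rw [← hu]
      linear_combination (a' U) * hkey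
    · push_neg at hut
      rw [count_W0 L U t hut]
      have hz : t.descFactorial u = 0 := by
        rw [Nat.descFactorial_eq_zero_iff_lt]
        omega
      rw [hz]
      simp
  rw [Finset.sum_congr rfl hterm]
  refine Finset.sum_filter_of_ne ?_
  intro U _ hne
  by_contra hUL
  rw [count_W_nsub L U hUL t] at hne
  simp at hne
end Symm

section Final
open Nat
variable {k : ℕ}

lemma Qpoly_eval_zero {a' : Finset (Fin k) → ℝ} {L : Finset (Fin k)} :
    (Qpoly a' L).eval 0 = mlEval a' (indE ∅) := by
  have h := Qpoly_eval (a' := a') (L := L) 0 (Nat.zero_le _)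
  rw [Nat.choose_zero_right, Finset.powersetCard_zero, Finset.sum_singleton] at h
  simpa using h

lemma Qpoly_eval_one {a' : Finset (Fin k) → ℝ} {L : Finset (Fin k)} (hm : 1 ≤ L.card) :
    (L.card : ℝ) * (Qpoly a' L).eval 1 = ∑ j ∈ L, mlEval a' (indE {j}) := by
  have h := Qpoly_eval (a' := a') (L := L) 1 hm
  rw [Nat.choose_one_right, Finset.powersetCard_one, Finset.sum_map] at h
  simpa using h

lemma Qpoly_bounded {a' : Finset (Fin k) → ℝ} {L : Finset (Fin k)}
    (hb : ∀ W : Finset (Fin k), |mlEval a' (indE W)| ≤ 4/3) :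
    ∀ t : ℕ, t ≤ L.card → |(Qpoly a' L).eval (t:ℝ)| ≤ 4/3 := by
  intro t ht
  have h := Qpoly_eval (a' := a') (L := L) t ht
  have hcpos : 0 < L.card.choose t := Nat.choose_pos ht
  have hcposR : (0:ℝ) < (L.card.choose t : ℝ) := by exact_mod_cast hcpos
  have habs : |(L.card.choose t : ℝ) * (Qpoly a' L).eval (t:ℝ)| ≤ (L.card.choose t : ℝ) * (4/3) := by
    rw [h]
    calc |∑ W ∈ Finset.powersetCard t L, mlEval a' (indE W)|
        ≤ ∑ W ∈ Finset.powersetCard t L, |mlEval a' (indE W)| := Finset.abs_sum_le_sum_abs _ _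
      _ ≤ ∑ _W ∈ Finset.powersetCard t L, (4/3 : ℝ) := Finset.sum_le_sum (fun W _ => hb W)
      _ = ((Finset.powersetCard t L).card : ℝ) * (4/3) := by
          rw [Finset.sum_const, nsmul_eq_mul]
      _ = (L.card.choose t : ℝ) * (4/3) := by rw [Finset.card_powersetCard]
  rw [abs_mul, abs_of_pos hcposR] at habs
  have := (mul_le_mul_iff_right₀ hcposR).mp habs
  linarith
end Final

end AuxStuff



set_option maxHeartbeats 1000000 in
/-- If `f` has monotone block sensitivity at least `k` — witnessed by an input `x` and `k`
pairwise disjoint sensitive 0-blocks — then `log asparsity(f) = Ω(√k)`; equivalently,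
`MBS(f) = O((log asparsity(f))²)`. -/
theorem stmt13 :
    ∃ c : ℝ, 0 < c ∧ ∃ C : ℝ, 0 ≤ C ∧
      ∀ (n k : ℕ) (f : (Fin n → Bool) → Bool) (x : Fin n → Bool) (B : Fin k → Finset (Fin n)),
        (∀ j, ∀ i ∈ B j, x i = false) →
        (∀ j, f (flipUp x (B j)) ≠ f x) →
        (Pairwise fun j j' => Disjoint (B j) (B j')) →
        c * Real.sqrt k - C ≤ Real.log (asparsity f) := by
  have hlog2 : 0 < Real.log 2 := Real.log_pos (by norm_num)
  refine ⟨Real.log 2 / 9, by positivity, Real.log 2, le_of_lt hlog2, ?_⟩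
  intro n k f x B hx hf hdisj
  have hlog0 : 0 ≤ Real.log (asparsity f) := by
    rcases Nat.eq_zero_or_pos (asparsity f) with h | h
    · rw [h]; simp
    · apply Real.log_nonneg
      exact_mod_cast h
  rcases Nat.eq_zero_or_pos k with hk | hk
  · rw [hk]
    simp only [Nat.cast_zero, Real.sqrt_zero, mul_zero, zero_sub]
    linarith
  -- the minimizing approximation
  have hset_ne : {s₀ : ℕ | ∃ a : Finset (Fin n) → ℝ,
      (∀ z, |mlEval a z - toRealFn f z| ≤ 1 / 3) ∧
      ((Finset.univ : Finset (Finset (Fin n))).filter (fun S => a S ≠ 0)).card ≤ s₀}.Nonempty := by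
    obtain ⟨a, ha⟩ := exists_exact f
    refine ⟨2^n, a, fun z => by rw [ha z]; simp, ?_⟩
    calc ((Finset.univ : Finset (Finset (Fin n))).filter (fun S => a S ≠ 0)).card
        ≤ (Finset.univ : Finset (Finset (Fin n))).card := Finset.card_filter_le _ _
      _ = 2^n := by rw [Finset.card_univ, Fintype.card_finset, Fintype.card_fin]
  have hmem : asparsity f ∈ {s₀ : ℕ | ∃ a : Finset (Fin n) → ℝ,
      (∀ z, |mlEval a z - toRealFn f z| ≤ 1 / 3) ∧
      ((Finset.univ : Finset (Finset (Fin n))).filter (fun S => a S ≠ 0)).card ≤ s₀} :=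
    Nat.sInf_mem hset_ne
  obtain ⟨a, ha, hacard⟩ := hmem
  set s := asparsity f with hsdef
  have hs1 : 1 ≤ s := by
    by_contra h
    have hs0 : s = 0 := by omega
    have hall : ∀ S, a S = 0 := by
      intro S
      by_contra hne
      have hSin : S ∈ (Finset.univ : Finset (Finset (Fin n))).filter (fun S => a S ≠ 0) :=
        Finset.mem_filter.mpr ⟨Finset.mem_univ _, hne⟩
      have := Finset.card_pos.mpr ⟨S, hSin⟩
      omega
    have hml : ∀ z, mlEval a z = 0 := by
      intro z
      apply Finset.sum_eq_zero
      intro S _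
      rw [hall S, zero_mul]
    have hfz : ∀ z, f z = false := by
      intro z
      by_contra hft
      have hzt : f z = true := by simpa using hft
      have h1 := ha z
      rw [hml z, toRealFn] at h1
      rw [hzt] at h1
      norm_num at h1
    have h2 := hf ⟨0, hk⟩
    rw [hfz, hfz] at h2
    exact h2 rfl
  set d := Nat.log 2 s + 1 with hd
  have hd1 : 1 ≤ d := by omega
  have hsd : s < 2^d := Nat.lt_pow_succ_log_self (by norm_num) s
  set a' := ared x B a with ha'
  have ha'supp : ((Finset.univ : Finset (Finset (Fin k))).filter (fun U => a' U ≠ 0)).card ≤ s :=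
    le_trans (ared_supp x B a) hacard
  have ha'eval : ∀ y, mlEval a' y = mlEval a (Pt x B y) := ared_eval x B a hx hdisj
  have hbnd : ∀ W : Finset (Fin k), |mlEval a' (indE W)| ≤ 4/3 := by
    intro W
    rw [ha'eval]
    have h1 := ha (Pt x B (indE W))
    have h2 : |toRealFn f (Pt x B (indE W))| ≤ 1 := by
      unfold toRealFn
      split <;> norm_num
    calc |mlEval a (Pt x B (indE W))|
        = |(mlEval a (Pt x B (indE W)) - toRealFn f (Pt x B (indE W)))
            + toRealFn f (Pt x B (indE W))| := by ring_nf
      _ ≤ |mlEval a (Pt x B (indE W)) - toRealFn f (Pt x B (indE W))|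
            + |toRealFn f (Pt x B (indE W))| := abs_add_le _ _
      _ ≤ 4/3 := by linarith
  have hkd : k ≤ 81 * d^2 := by
    rcases le_or_gt k d with h | hdk
    · have : d ≤ d^2 := by nlinarith
      omega
    · set 𝒰 := ((Finset.univ : Finset (Finset (Fin k))).filter (fun U => a' U ≠ 0)).filter
        (fun U => d < U.card) with h𝒰
      have h𝒰s : 𝒰.card ≤ s :=
        le_trans (Finset.card_le_card (Finset.filter_subset _ _)) ha'supp
      have hbig : ∀ U ∈ 𝒰, d < U.card := fun U hU => (Finset.mem_filter.mp hU).2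
      obtain ⟨L, hL1, hL2⟩ := exists_live hdk 𝒰 h𝒰s hsd hbig
      have hm1 : 1 ≤ L.card := by omega
      have hdeg : (Qpoly a' L).natDegree ≤ d := by
        apply Qpoly_natDegree
        intro U hne hUL
        by_contra hc
        push_neg at hc
        exact hL2 U (Finset.mem_filter.mpr
          ⟨Finset.mem_filter.mpr ⟨Finset.mem_univ _, hne⟩, hc⟩) hUL
      have hQb : ∀ t : ℕ, t ≤ L.card → |(Qpoly a' L).eval (t:ℝ)| ≤ 4/3 := Qpoly_bounded hbnd
      set b : ℝ := toRealFn f x with hb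
      have hindempty : indE (∅ : Finset (Fin k)) = fun _ => false := by
        funext j
        simp [indE]
      have hQ0 : (Qpoly a' L).eval 0 = mlEval a x := by
        rw [Qpoly_eval_zero, ha'eval, hindempty, Pt_false]
      have h0 : |(Qpoly a' L).eval 0 - b| ≤ 1/3 := by
        rw [hQ0, hb]
        exact ha x
      have hflip : ∀ j : Fin k, |mlEval a' (indE {j}) - (1 - b)| ≤ 1/3 := by
        intro j
        rw [ha'eval, Pt_single]
        have h1 := ha (flipUp x (B j))
        have h2 : toRealFn f (flipUp x (B j)) = 1 - b := by
          rw [hb]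
          unfold toRealFn
          have := hf j
          cases hfx : f x <;> cases hffu : f (flipUp x (B j)) <;>
            rw [hfx, hffu] at this <;> simp_all
        rw [← h2]
        exact h1
      have h1b : |(Qpoly a' L).eval 1 - (1 - b)| ≤ 1/3 := by
        have heq := Qpoly_eval_one (a' := a') (L := L) hm1
        have hmR : (0:ℝ) < (L.card : ℝ) := by exact_mod_cast hm1
        have hdiff : (L.card : ℝ) * ((Qpoly a' L).eval 1 - (1 - b))
            = ∑ j ∈ L, (mlEval a' (indE {j}) - (1 - b)) := by
          rw [Finset.sum_sub_distrib, ← heq, Finset.sum_const, nsmul_eq_mul]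
          ring
        have habs : (L.card : ℝ) * |(Qpoly a' L).eval 1 - (1 - b)| ≤ (L.card : ℝ) * (1/3) := by
          calc (L.card : ℝ) * |(Qpoly a' L).eval 1 - (1 - b)|
              = |(L.card : ℝ) * ((Qpoly a' L).eval 1 - (1 - b))| := by
                rw [abs_mul, abs_of_pos hmR]
            _ = |∑ j ∈ L, (mlEval a' (indE {j}) - (1 - b))| := by rw [hdiff]
            _ ≤ ∑ j ∈ L, |mlEval a' (indE {j}) - (1 - b)| := Finset.abs_sum_le_sum_abs _ _
            _ ≤ ∑ _j ∈ L, (1/3 : ℝ) := Finset.sum_le_sum (fun j _ => hflip j)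
            _ = (L.card : ℝ) * (1/3) := by rw [Finset.sum_const, nsmul_eq_mul]
        exact le_of_mul_le_mul_left (by linarith [habs]) hmR
      have hjump : 1/3 ≤ |(Qpoly a' L).eval 1 - (Qpoly a' L).eval 0| := by
        have hb01 : b = 0 ∨ b = 1 := by
          rw [hb]
          unfold toRealFn
          split
          · right; rfl
          · left; rfl
        rw [abs_le] at h0 h1b
        rcases hb01 with h | h
        · rw [h] at h0 h1b
          have : 1/3 ≤ (Qpoly a' L).eval 1 - (Qpoly a' L).eval 0 := by
            simp only [sub_zero] at h0 h1b
            linarith [h0.1, h0.2, h1b.1, h1b.2]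
          exact le_trans this (le_abs_self _)
        · rw [h] at h0 h1b
          have : 1/3 ≤ (Qpoly a' L).eval 0 - (Qpoly a' L).eval 1 := by
            linarith [h0.1, h0.2, h1b.1, h1b.2]
          rw [abs_sub_comm]
          exact le_trans this (le_abs_self _)
      have hml := univariate d L.card hd1 (Qpoly a' L) hdeg hQb hjump
      omega
  have hsqrt : Real.sqrt k ≤ 9 * d := by
    have h1 : (k:ℝ) ≤ ((9*d : ℕ):ℝ)^2 := by
      have : k ≤ (9*d)^2 := by nlinarith
      exact_mod_cast this
    calc Real.sqrt k ≤ Real.sqrt (((9*d : ℕ):ℝ)^2) := Real.sqrt_le_sqrt h1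
      _ = ((9*d : ℕ):ℝ) := Real.sqrt_sq (by positivity)
      _ = 9 * d := by push_cast; ring
  have hlogd : (d:ℝ) * Real.log 2 ≤ Real.log s + Real.log 2 := by
    have h2 : ((2:ℕ):ℝ)^(Nat.log 2 s) ≤ (s:ℝ) := by
      exact_mod_cast Nat.pow_log_le_self 2 (by omega)
    have h3 : Real.log (((2:ℕ):ℝ)^(Nat.log 2 s)) ≤ Real.log s := by
      apply Real.log_le_log (by positivity) h2
    rw [Real.log_pow] at h3
    have hdc : (d:ℝ) = (Nat.log 2 s : ℝ) + 1 := by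
      rw [hd]
      push_cast
      ring
    rw [hdc]
    push_cast at h3
    nlinarith [h3]
  have hc9 : 0 ≤ Real.log 2 / 9 := by positivity
  calc (Real.log 2 / 9) * Real.sqrt (k:ℝ) - Real.log 2
      ≤ (Real.log 2 / 9) * (9*d) - Real.log 2 := by
        nlinarith [mul_le_mul_of_nonneg_left hsqrt hc9]
    _ = (d:ℝ) * Real.log 2 - Real.log 2 := by ring
    _ ≤ Real.log s := by linarith
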